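/- Let G = (A, u) be a game with reduced outcome set Ā, and let F ⊆ Δ(A) be a set of correlated strategy profiles with Ā ⊆ F (identifying outcomes with their point-mass distributions). Then there exists a map Ψ : Ā → F with u(Ψ(a)) ⪰ u(a) for all a ∈ Ā and u(Ψ(a)) ≻ u(a) for some a ∈ Ā (an omnilateral default-remapping SPI into F) if and only if some outcome of the reduced game is Pareto sub-optimal in F, i.e., there exist a ∈ Ā and f ∈ F with u(f) ≻ u(a). In particular this holds with F = A (pure default-remapping) and with F = Δ(A) (correlated default-remapping). -/

import Mathlib

namespace SPIs

/-- `Pareto x y` means `y` is a weak Pareto improvement on `x`, i.e. `y ⪰ x`. -/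
def Pareto {n : ℕ} (x y : Fin n → ℝ) : Prop := ∀ i, x i ≤ y i

/-- `StrictPareto x y` means `y` is a strict Pareto improvement on `x`, i.e. `y ≻ x`. -/
def StrictPareto {n : ℕ} (x y : Fin n → ℝ) : Prop := Pareto x y ∧ ∃ i, x i < y i

/-- An `n`-player normal-form game whose (finite, nonempty) action sets are drawn from the
fixed countably infinite universe `ℕ`. -/
structure Game (n : ℕ) where
  act : Fin n → Finset ℕ
  act_nonempty : ∀ i, (act i).Nonempty
  u : (Fin n → ℕ) → Fin n → ℝ

namespace Game

variable {n : ℕ}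

/-- `a` is an outcome (action profile) of `G`. -/
def mem (G : Game n) (a : Fin n → ℕ) : Prop := ∀ i, a i ∈ G.act i

/-- Action `x` of Player `i` is strictly dominated (by some action `x'`) in `G`. -/
def Dominated (G : Game n) (i : Fin n) (x : ℕ) : Prop :=
  x ∈ G.act i ∧ ∃ x' ∈ G.act i, ∀ a : Fin n → ℕ, G.mem a →
    G.u (Function.update a i x) i < G.u (Function.update a i x') i

/-- `G` contains no strictly dominated actions. -/
def FullyReduced (G : Game n) : Prop := ∀ i x, ¬ G.Dominated i x

/-- `G'` is obtained from `G` by removing a single strictly dominated action. -/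
def RemoveStep (G G' : Game n) : Prop :=
  ∃ i x, G.Dominated i x ∧
    G'.act = Function.update G.act i ((G.act i).erase x) ∧ G'.u = G.u

/-- `H` is the reduced game `Ḡ` of `G`: it is obtained from `G` by iteratively removing
strictly dominated actions and itself has none left. -/
def IsReduction (G H : Game n) : Prop :=
  Relation.ReflTransGen RemoveStep G H ∧ H.FullyReduced

/-- `φ` is a game isomorphism from `G` to `G'`. -/
def Iso (G G' : Game n) (φ : Fin n → ℕ → ℕ) : Prop :=
  (∀ i, Set.BijOn (φ i) (G.act i : Set ℕ) (G'.act i : Set ℕ)) ∧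
  ∃ m b : Fin n → ℝ, (∀ i, 0 < m i) ∧
    ∀ a : Fin n → ℕ, G.mem a → ∀ i, G'.u (fun j => φ j (a j)) i = m i * G.u a i + b i

/-- The finite set of all action profiles of `G`. -/
def outcomes (G : Game n) : Finset (Fin n → ℕ) := Fintype.piFinset G.act

end Game

/-- `p` is a correlated strategy profile (probability distribution over outcomes) of `G`. -/
def IsDistOn {n : ℕ} (G : Game n) (p : (Fin n → ℕ) → ℝ) : Prop :=
  (∀ a, 0 ≤ p a) ∧ (∀ a : Fin n → ℕ, ¬ G.mem a → p a = 0) ∧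
    (∑ a ∈ G.outcomes, p a) = 1

/-- The expected utility vector of a correlated strategy profile `p` in `G`. -/
def expU {n : ℕ} (G : Game n) (p : (Fin n → ℕ) → ℝ) : Fin n → ℝ :=
  fun i => ∑ a ∈ G.outcomes, p a * G.u a i

/-- The point-mass distribution on the outcome `a`. -/
def pointMass {n : ℕ} (a : Fin n → ℕ) : (Fin n → ℕ) → ℝ :=
  fun b => if b = a then 1 else 0

lemma mem_of_reduction {n : ℕ} {G Gb : Game n} (hred : Game.IsReduction G Gb)
    {a : Fin n → ℕ} (ha : Gb.mem a) : G.mem a := by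
  obtain ⟨hsteps, -⟩ := hred
  induction hsteps with
  | refl => exact ha
  | tail _ step ih =>
    apply ih
    obtain ⟨i, x, _, hact, -⟩ := step
    intro j
    have := ha j
    rw [hact] at this
    by_cases hj : j = i
    · subst hj
      rw [Function.update_self] at this
      exact Finset.mem_of_mem_erase this
    · rwa [Function.update_of_ne hj] at this

lemma expU_pointMass {n : ℕ} (G : Game n) {a : Fin n → ℕ} (ha : G.mem a) :
    expU G (pointMass a) = G.u a := by
  funext i
  have hmem : a ∈ G.outcomes := by
    simpa [Game.outcomes, Fintype.mem_piFinset, Game.mem] using ha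
  unfold expU pointMass
  simp [ite_mul, Finset.sum_ite_eq' G.outcomes a, hmem]

/-- an omnilateral default-remapping SPI of `G` into a feasible set
`F ⊆ Δ(A)` (with `Ā ⊆ F` via point masses) exists iff some outcome of the reduced game is
Pareto sub-optimal in `F`. In particular this applies with `F = A` (pure default-remapping)
and `F = Δ(A)` (correlated default-remapping). -/
theorem omnilateral_default_remapping_spi_iff {n : ℕ} (G Gb : Game n)
    (hred : Game.IsReduction G Gb)
    (F : Set ((Fin n → ℕ) → ℝ)) (hF : ∀ p ∈ F, IsDistOn G p)
    (hAF : ∀ a, Gb.mem a → pointMass a ∈ F) :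
    (∃ Ψ : (Fin n → ℕ) → ((Fin n → ℕ) → ℝ),
        (∀ a, Gb.mem a → Ψ a ∈ F) ∧
        (∀ a, Gb.mem a → Pareto (G.u a) (expU G (Ψ a))) ∧
        (∃ a, Gb.mem a ∧ StrictPareto (G.u a) (expU G (Ψ a)))) ↔
      (∃ a, Gb.mem a ∧ ∃ f ∈ F, StrictPareto (G.u a) (expU G f)) := by
  constructor
  · rintro ⟨Ψ, hΨF, -, a, ha, hstrict⟩
    exact ⟨a, ha, Ψ a, hΨF a ha, hstrict⟩
  · rintro ⟨a₀, ha₀, f₀, hf₀F, hstrict⟩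
    refine ⟨fun b => if b = a₀ then f₀ else pointMass b, ?_, ?_, ?_⟩
    · intro a ha
      by_cases h : a = a₀ <;> simp [h, hf₀F, hAF a ha]
    · intro a ha
      by_cases h : a = a₀
      · subst h; simpa using hstrict.1
      · simp only [if_neg h]
        rw [expU_pointMass G (mem_of_reduction hred ha)]
        exact fun i => le_refl _
    · exact ⟨a₀, ha₀, by simpa using hstrict⟩

end SPIs
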